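/- Let X ∈ B(E,F) have generalized inverse X⁺, and define P : B(E,F) → B(E,F) by P(T) = X X⁺ T + (I_F − X X⁺) T X⁺ X. Then P is a bounded projection (P² = P) with range M(X) = {T : T N(X) ⊆ R(X)} and kernel { T : R(T) ⊆ N(X⁺) and N(T) ⊇ R(X⁺) }. -/

import Mathlib

theorem stmt_15 {E F : Type*} [NormedAddCommGroup E] [NormedSpace ℝ E] [CompleteSpace E]
    [NormedAddCommGroup F] [NormedSpace ℝ F] [CompleteSpace F]
    (X : E →L[ℝ] F) (Xp : F →L[ℝ] E)
    (h1 : X ∘L Xp ∘L X = X) (h2 : Xp ∘L X ∘L Xp = Xp)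
    (P : (E →L[ℝ] F) → (E →L[ℝ] F))
    (hPdef : ∀ T, P T = (X ∘L Xp) ∘L T + ((1 : F →L[ℝ] F) - X ∘L Xp) ∘L T ∘L (Xp ∘L X)) :
    (∀ a : ℝ, ∀ T S : E →L[ℝ] F, P (a • T + S) = a • P T + P S) ∧
    (∀ T, P (P T) = P T) ∧
    Set.range P = {T : E →L[ℝ] F | ∀ e ∈ LinearMap.ker (X : E →ₗ[ℝ] F), T e ∈ LinearMap.range (X : E →ₗ[ℝ] F)} ∧
    {T : E →L[ℝ] F | P T = 0} =
      {T : E →L[ℝ] F | (∀ x : E, T x ∈ LinearMap.ker (Xp : F →ₗ[ℝ] E)) ∧ ∀ y : F, T (Xp y) = 0} := by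
  have h1' : ∀ u, X (Xp (X u)) = X u := fun u =>
    congrArg (fun f : E →L[ℝ] F => f u) h1
  have h2' : ∀ v, Xp (X (Xp v)) = Xp v := fun v =>
    congrArg (fun f : F →L[ℝ] E => f v) h2
  refine ⟨?_, ?_, ?_, ?_⟩
  · intro a T S
    ext e
    simp [hPdef, map_add, map_smul]
    abel
  · intro T
    ext e
    simp [hPdef, map_add, map_sub, h1', h2']
  · ext T
    simp only [Set.mem_range, Set.mem_setOf_eq]
    constructor
    · rintro ⟨S, rfl⟩ e he
      have hX : X e = 0 := LinearMap.mem_ker.mp he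
      refine ⟨Xp (S e), ?_⟩
      simp [hPdef, hX]
    · intro hT
      refine ⟨T, ?_⟩
      ext e
      have hker : (e - Xp (X e)) ∈ LinearMap.ker (X : E →ₗ[ℝ] F) := by
        simp [LinearMap.mem_ker, map_sub, h1']
      obtain ⟨u, hu⟩ := hT _ hker
      have hu' : T (Xp (X e)) = T e - X u := by
        rw [show X u = T (e - Xp (X e)) from hu, map_sub]; abel
      simp [hPdef, hu', map_sub, h1']
  · ext T
    simp only [Set.mem_setOf_eq]
    constructor
    · intro h0
      have hA : ∀ x, Xp (T x) = 0 := by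
        intro x
        have h := congrArg (fun f : E →L[ℝ] F => Xp (f x)) h0
        simpa [hPdef, map_add, map_sub, h2'] using h
      have hB : ∀ y, T (Xp y) = 0 := by
        intro y
        have h := congrArg (fun f : E →L[ℝ] F => f (Xp y)) h0
        simpa [hPdef, hA, h2'] using h
      exact ⟨fun x => LinearMap.mem_ker.mpr (hA x), hB⟩
    · rintro ⟨hA, hB⟩
      have hA' : ∀ x, Xp (T x) = 0 := fun x => LinearMap.mem_ker.mp (hA x)
      ext e
      simp [hPdef, hA', hB]
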